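/- Weak-* convergence of characters implies absorption: let (V_α)_{α} be a net of linear subspaces of ℝ^m and w_α ∈ V_α^⊥ (indexed by a directed set, equivalently formulated with a filter on the index type), let V ⊆ ℝ^m be a linear subspace and w ∈ V^⊥, and suppose the characters χ(V_α + w_α) converge to χ(V + w) in the weak-* topology (i.e. χ(V_α + w_α)(f) → χ(V+w)(f) for every f ∈ C_R(ℝ^m)). Then eventually V_α ⊆ V, and P_{V^⊥} w_α → w in ℝ^m. -/

import Mathlib

open Filter Topology
open scoped BoundedContinuousFunction InnerProductSpace

noncomputable section

/-- `ℝ^m` with its standard inner product. -/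
abbrev E (m : ℕ) : Type := EuclideanSpace ℝ (Fin m)

/-- The resolvent functions `h^λ_x : y ↦ 1/(iλ - ⟨x,y⟩)`, as elements of `C_b(ℝ^m, ℂ)`. -/
def resolventFns (m : ℕ) : Set (E m →ᵇ ℂ) :=
  {f | ∃ (x : E m) (l : ℝ), l ≠ 0 ∧
    ∀ y : E m, f y = (Complex.I * (l : ℂ) - ((⟪x, y⟫_ℝ : ℝ) : ℂ))⁻¹}

/-- The commutative resolvent algebra: the smallest closed star-subalgebra of
`C_b(ℝ^m, ℂ)` containing all the functions `h^λ_x`. -/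
def CR (m : ℕ) : StarSubalgebra ℂ (E m →ᵇ ℂ) :=
  (StarAlgebra.adjoin ℂ (resolventFns m)).topologicalClosure

/-- The distance of `f` to the set `S` in the sup norm, `inf {‖f - ξ‖_∞ : ξ ∈ S}`. -/
def qdist {m : ℕ} (S : Set (E m →ᵇ ℂ)) (f : E m →ᵇ ℂ) : ℝ :=
  sInf ((fun ξ => ‖f - ξ‖) '' S)

/-- The recursive filtration `C_r(ℝ^m)`: `C_0` consists of the continuous functions vanishing
at infinity; `C_{r+1}` consists of those bounded continuous `f` admitting a countable family
of levees `g_i ∘ P_i`, with pairwise distinct orthogonal projections `P_i` onto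
`(m - (r+1))`-dimensional subspaces and `g_i ∈ C₀(ran P_i)`, summing unconditionally to `f`
in the seminorm `‖·‖_r = qdist (Cfilt m r)`. -/
def Cfilt (m : ℕ) : ℕ → Set (E m →ᵇ ℂ)
  | 0 => {f | Tendsto f (cocompact (E m)) (𝓝 0)}
  | (r + 1) =>
    {f | ∃ (I : Set ℕ) (V : I → Submodule ℝ (E m)) (g : ∀ i : I, V i → ℂ)
        (F : I → (E m →ᵇ ℂ)),
      Function.Injective V ∧
      (∀ i, Module.finrank ℝ (V i) = m - (r + 1)) ∧
      (∀ i, Continuous (g i)) ∧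
      (∀ i, Tendsto (g i) (cocompact _) (𝓝 0)) ∧
      (∀ (i : I) (y : E m), F i y = g i (Submodule.orthogonalProjectionOnto (V i) y)) ∧
      Tendsto (fun s : Finset I => qdist (Cfilt m r) (f - ∑ i ∈ s, F i)) atTop (𝓝 0)}


/-- The defining property of the character `χ(V+w)` of `C_R(ℝ^m)`: on any levee `g ∘ P_U`
(with `U ⊆ ℝ^m` a subspace and `g ∈ C₀(U)`) it takes the value `g(P_U w)` if `V ⊆ U^⊥`,
and `0` otherwise. -/
def IsResolventChar (m : ℕ) (V : Submodule ℝ (E m)) (w : E m)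
    (φ : ↥(CR m) → ℂ) : Prop :=
  ∀ (U : Submodule ℝ (E m)) (g : U → ℂ), Continuous g →
    Tendsto g (cocompact _) (𝓝 0) →
    ∀ f : ↥(CR m), (∀ y : E m, (f : E m →ᵇ ℂ) y = g (Submodule.orthogonalProjectionOnto U y)) →
      (V ≤ Uᗮ → φ f = g (Submodule.orthogonalProjectionOnto U w)) ∧ (¬ V ≤ Uᗮ → φ f = 0)

lemma aux_denom_ne_zero {l : ℝ} (hl : l ≠ 0) (t : ℝ) :
    Complex.I * (l : ℂ) - (t : ℂ) ≠ 0 := by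
  intro h
  have h2 := congrArg Complex.im h
  simp at h2
  exact hl h2

lemma aux_im_le (l t : ℝ) : |l| ≤ ‖Complex.I * (l : ℂ) - (t : ℂ)‖ := by
  have := Complex.abs_im_le_norm (Complex.I * (l : ℂ) - (t : ℂ))
  simpa using this

lemma aux_re_le (l t : ℝ) : |t| ≤ ‖Complex.I * (l : ℂ) - (t : ℂ)‖ := by
  have := Complex.abs_re_le_norm (Complex.I * (l : ℂ) - (t : ℂ))
  simpa using this

def hfun (m : ℕ) (x : E m) (l : ℝ) (hl : l ≠ 0) : E m →ᵇ ℂ :=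
  BoundedContinuousFunction.ofNormedAddCommGroup
    (fun y => (Complex.I * (l : ℂ) - ((⟪x, y⟫_ℝ : ℝ) : ℂ))⁻¹)
    (Continuous.inv₀
      (continuous_const.sub (Complex.continuous_ofReal.comp (continuous_const.inner continuous_id)))
      (fun y => aux_denom_ne_zero hl _))
    |l|⁻¹
    (fun y => by
      rw [norm_inv]
      exact inv_anti₀ (abs_pos.2 hl) (aux_im_le l _))

lemma inner_orthogonalProjection_eq {m : ℕ} (U : Submodule ℝ (E m)) (x : E m)
    (hxU : x ∈ U) (y : E m) :
    ⟪x, (Submodule.orthogonalProjectionOnto U y : E m)⟫_ℝ = ⟪x, y⟫_ℝ := by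
  have h : y - (Submodule.orthogonalProjectionOnto U y : E m) ∈ Uᗮ :=
    Submodule.sub_starProjection_mem_orthogonal (K := U) y
  have h2 := (Submodule.mem_orthogonal U _).1 h x hxU
  rw [inner_sub_right] at h2
  linarith

lemma le_span_orth_iff {m : ℕ} (V : Submodule ℝ (E m)) (x : E m) :
    V ≤ (Submodule.span ℝ {x})ᗮ ↔ x ∈ Vᗮ := by
  constructor
  · intro h
    rw [Submodule.mem_orthogonal]
    intro v hv
    have h2 := (Submodule.mem_orthogonal _ _).1 (h hv) x (Submodule.mem_span_singleton_self x)
    rwa [real_inner_comm] at h2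
  · intro h v hv
    rw [Submodule.mem_orthogonal]
    intro u hu
    obtain ⟨c, rfl⟩ := Submodule.mem_span_singleton.1 hu
    rw [real_inner_smul_left]
    have h2 := (Submodule.mem_orthogonal V x).1 h v hv
    rw [real_inner_comm] at h2
    rw [h2, mul_zero]

lemma g_cocompact {m : ℕ} (x : E m) (hx : x ≠ 0) (l : ℝ) :
    Tendsto (fun u : Submodule.span ℝ {x} =>
        (Complex.I * (l : ℂ) - ((⟪x, (u : E m)⟫_ℝ : ℝ) : ℂ))⁻¹)
      (cocompact _) (𝓝 0) := by
  have hxn : (0:ℝ) < ‖x‖ := norm_pos_iff.2 hx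
  have hbound : ∀ᶠ u : Submodule.span ℝ {x} in cocompact _,
      ‖(Complex.I * (l : ℂ) - ((⟪x, (u : E m)⟫_ℝ : ℝ) : ℂ))⁻¹‖ ≤ (‖x‖ * ‖(u : E m)‖)⁻¹ := by
    have hmem : {u : Submodule.span ℝ {x} | u ≠ 0} ∈ cocompact (Submodule.span ℝ {x}) :=
      mem_cocompact.2 ⟨{0}, isCompact_singleton, fun u hu => hu⟩
    filter_upwards [hmem] with u hu
    obtain ⟨c, hc⟩ := Submodule.mem_span_singleton.1 u.2
    have hkey : ‖x‖ * ‖(u : E m)‖ = |⟪x, (u : E m)⟫_ℝ| := by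
      rw [← hc, real_inner_smul_right, real_inner_self_eq_norm_sq, norm_smul, abs_mul]
      simp [Real.norm_eq_abs, pow_two]
      ring
    rw [norm_inv]
    apply inv_anti₀
    · rw [hkey]
      rw [abs_pos]
      intro h0
      apply hu
      have : ‖x‖ * ‖(u : E m)‖ = 0 := by rw [hkey, h0, abs_zero]
      rcases mul_eq_zero.1 this with h | h
      · exact absurd h (ne_of_gt hxn)
      · exact Subtype.ext (by simpa using norm_eq_zero.1 h)
    · rw [hkey]; exact aux_re_le l _
  refine squeeze_zero_norm' hbound ?_
  have h1 : Tendsto (fun u : Submodule.span ℝ {x} => ‖(u : E m)‖) (cocompact _) atTop := by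
    have := tendsto_norm_cocompact_atTop (E := Submodule.span ℝ {x})
    exact this
  have h2 : Tendsto (fun u : Submodule.span ℝ {x} => ‖x‖ * ‖(u : E m)‖) (cocompact _) atTop :=
    Tendsto.const_mul_atTop hxn h1
  exact h2.inv_tendsto_atTop


lemma hfun_mem_CR (m : ℕ) (x : E m) (l : ℝ) (hl : l ≠ 0) : hfun m x l hl ∈ CR m :=
  StarSubalgebra.le_topologicalClosure _
    (StarAlgebra.subset_adjoin ℂ _ ⟨x, l, hl, fun _ => rfl⟩)

set_option maxHeartbeats 1000000 in
lemma keyA (m : ℕ) {ι : Type*} (l : Filter ι) [l.NeBot]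
    (Vnet : ι → Submodule ℝ (E m)) (wnet : ι → E m)
    (V : Submodule ℝ (E m)) (w : E m)
    (φnet : ι → WeakDual.characterSpace ℂ (CR m)) (φ : WeakDual.characterSpace ℂ (CR m))
    (hφnet : ∀ α, IsResolventChar m (Vnet α) (wnet α)
      (fun a => (φnet α : WeakDual ℂ (CR m)) a))
    (hφ : IsResolventChar m V w (fun a => (φ : WeakDual ℂ (CR m)) a))
    (hconv : ∀ f : ↥(CR m),
      Tendsto (fun α => (φnet α : WeakDual ℂ (CR m)) f) l (𝓝 ((φ : WeakDual ℂ (CR m)) f)))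
    (x : E m) (hx : x ≠ 0) (hxV : x ∈ Vᗮ) :
    (∀ᶠ α in l, x ∈ (Vnet α)ᗮ) ∧
      Tendsto (fun α => ⟪x, wnet α⟫_ℝ) l (𝓝 ⟪x, w⟫_ℝ) := by
  set U := Submodule.span ℝ {x} with hU
  set g : U → ℂ := fun u => (Complex.I * ((1:ℝ) : ℂ) - ((⟪x, (u : E m)⟫_ℝ : ℝ) : ℂ))⁻¹ with hg
  set f : ↥(CR m) := ⟨hfun m x 1 one_ne_zero, hfun_mem_CR m x 1 one_ne_zero⟩ with hf
  have hgc : Continuous g :=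
    Continuous.inv₀
      (continuous_const.sub (Complex.continuous_ofReal.comp
        ((continuous_const.inner continuous_id).comp continuous_subtype_val)))
      (fun u => aux_denom_ne_zero one_ne_zero _)
  have hgz : Tendsto g (cocompact _) (𝓝 0) := g_cocompact x hx 1
  have hfg : ∀ y : E m, (f : E m →ᵇ ℂ) y = g (Submodule.orthogonalProjectionOnto U y) := by
    intro y
    show (Complex.I * ((1:ℝ) : ℂ) - ((⟪x, y⟫_ℝ : ℝ) : ℂ))⁻¹
      = (Complex.I * ((1:ℝ) : ℂ)
          - ((⟪x, ((Submodule.orthogonalProjectionOnto U y : U) : E m)⟫_ℝ : ℝ) : ℂ))⁻¹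
    rw [inner_orthogonalProjection_eq U x (Submodule.mem_span_singleton_self x) y]
  have hVU : V ≤ Uᗮ := (le_span_orth_iff V x).2 hxV
  have hφf : (φ : WeakDual ℂ (CR m)) f = (Complex.I * ((1:ℝ) : ℂ) - ((⟪x, w⟫_ℝ : ℝ) : ℂ))⁻¹ := by
    have h' : (φ : WeakDual ℂ (CR m)) f
        = (Complex.I * ((1:ℝ) : ℂ)
            - ((⟪x, ((Submodule.orthogonalProjectionOnto U w : U) : E m)⟫_ℝ : ℝ) : ℂ))⁻¹ :=
      (hφ U g hgc hgz f hfg).1 hVU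
    rw [h', inner_orthogonalProjection_eq U x (Submodule.mem_span_singleton_self x) w]
  have hne : (Complex.I * ((1:ℝ) : ℂ) - ((⟪x, w⟫_ℝ : ℝ) : ℂ))⁻¹ ≠ 0 :=
    inv_ne_zero (aux_denom_ne_zero one_ne_zero _)
  have hconvf := hconv f
  rw [hφf] at hconvf
  have hev : ∀ᶠ α in l, x ∈ (Vnet α)ᗮ := by
    have h1 : ∀ᶠ α in l, (φnet α : WeakDual ℂ (CR m)) f ≠ 0 := hconvf.eventually_ne hne
    filter_upwards [h1] with α hα
    by_contra hmem
    exact hα ((hφnet α U g hgc hgz f hfg).2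
      (fun hle => hmem ((le_span_orth_iff _ x).1 hle)))
  refine ⟨hev, ?_⟩
  have hcongr : ∀ᶠ α in l, (φnet α : WeakDual ℂ (CR m)) f
      = (Complex.I * ((1:ℝ) : ℂ) - ((⟪x, wnet α⟫_ℝ : ℝ) : ℂ))⁻¹ := by
    filter_upwards [hev] with α hα
    have h' : (φnet α : WeakDual ℂ (CR m)) f
        = (Complex.I * ((1:ℝ) : ℂ)
            - ((⟪x, ((Submodule.orthogonalProjectionOnto U (wnet α) : U) : E m)⟫_ℝ : ℝ) : ℂ))⁻¹ :=
      (hφnet α U g hgc hgz f hfg).1 ((le_span_orth_iff _ x).2 hα)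
    rw [h', inner_orthogonalProjection_eq U x (Submodule.mem_span_singleton_self x) (wnet α)]
  have h2 : Tendsto (fun α => (Complex.I * ((1:ℝ) : ℂ) - ((⟪x, wnet α⟫_ℝ : ℝ) : ℂ))⁻¹) l
      (𝓝 ((Complex.I * ((1:ℝ) : ℂ) - ((⟪x, w⟫_ℝ : ℝ) : ℂ))⁻¹)) :=
    hconvf.congr' hcongr
  have h3 := h2.inv₀ hne
  simp only [inv_inv] at h3
  have h5 : Tendsto (fun α => ((⟪x, wnet α⟫_ℝ : ℝ) : ℂ)) l (𝓝 ((⟪x, w⟫_ℝ : ℝ) : ℂ)) := by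
    have h4 := (tendsto_const_nhds (x := Complex.I * ((1:ℝ) : ℂ)) (f := l)).sub h3
    simpa using h4
  have h6 := (Complex.continuous_re.tendsto _).comp h5
  simpa only [Function.comp_def, Complex.ofReal_re] using h6

set_option maxHeartbeats 1000000 in
/-- weak-* convergence of characters implies absorption: if a net of characters
`χ(V_α + w_α)` converges pointwise to `χ(V + w)`, then eventually `V_α ⊆ V`, and
`P_{V^⊥} w_α → w`. -/
theorem characters_tendsto_absorbed (m : ℕ) {ι : Type*} (l : Filter ι) [l.NeBot]
    (Vnet : ι → Submodule ℝ (E m)) (wnet : ι → E m) (hwnet : ∀ α, wnet α ∈ (Vnet α)ᗮ)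
    (V : Submodule ℝ (E m)) (w : E m) (hw : w ∈ Vᗮ)
    (φnet : ι → WeakDual.characterSpace ℂ (CR m)) (φ : WeakDual.characterSpace ℂ (CR m))
    (hφnet : ∀ α, IsResolventChar m (Vnet α) (wnet α)
      (fun a => (φnet α : WeakDual ℂ (CR m)) a))
    (hφ : IsResolventChar m V w (fun a => (φ : WeakDual ℂ (CR m)) a))
    (hconv : ∀ f : ↥(CR m),
      Tendsto (fun α => (φnet α : WeakDual ℂ (CR m)) f) l (𝓝 ((φ : WeakDual ℂ (CR m)) f))) :
    (∀ᶠ α in l, Vnet α ≤ V) ∧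
    Tendsto (fun α => (Submodule.orthogonalProjectionOnto Vᗮ (wnet α) : E m)) l (𝓝 w) := by
  have key : ∀ x : E m, x ∈ Vᗮ → ((∀ᶠ α in l, x ∈ (Vnet α)ᗮ) ∧
      Tendsto (fun α => ⟪x, wnet α⟫_ℝ) l (𝓝 ⟪x, w⟫_ℝ)) := by
    intro x hxV
    by_cases hx : x = 0
    · subst hx
      refine ⟨Eventually.of_forall (fun α => Submodule.zero_mem _), ?_⟩
      simp only [inner_zero_left]
      exact tendsto_const_nhds
    · exact keyA m l Vnet wnet V w φnet φ hφnet hφ hconv x hx hxV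
  constructor
  · obtain ⟨S, hS⟩ := (IsNoetherian.noetherian Vᗮ : Submodule.FG Vᗮ)
    have hev : ∀ᶠ α in l, ∀ x ∈ S, x ∈ (Vnet α)ᗮ := by
      rw [eventually_all_finset]
      intro x hxS
      refine (key x ?_).1
      rw [← hS]
      exact Submodule.subset_span hxS
    filter_upwards [hev] with α hα
    have h1 : Vᗮ ≤ (Vnet α)ᗮ := by
      rw [← hS]
      exact Submodule.span_le.2 (fun x hx => hα x hx)
    calc Vnet α ≤ (Vnet α)ᗮᗮ := Submodule.le_orthogonal_orthogonal _
      _ ≤ Vᗮᗮ := Submodule.orthogonal_le h1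
      _ = V := Submodule.orthogonal_orthogonal V
  · set K := Vᗮ with hK
    set b := stdOrthonormalBasis ℝ K with hb
    have hproj : ∀ u : E m, (Submodule.orthogonalProjectionOnto K u : E m)
        = ∑ i, ⟪((b i : K) : E m), u⟫_ℝ • ((b i : K) : E m) := by
      intro u
      have h1 := b.sum_repr' (Submodule.orthogonalProjectionOnto K u)
      have h2 := congrArg (Submodule.subtype K) h1
      simp only [map_sum, map_smul, Submodule.subtype_apply] at h2
      rw [← h2]
      refine Finset.sum_congr rfl (fun i _ => ?_)
      rw [Submodule.coe_inner, inner_orthogonalProjection_eq K _ (SetLike.coe_mem _) u]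
    have hw' : w = ∑ i, ⟪((b i : K) : E m), w⟫_ℝ • ((b i : K) : E m) := by
      conv_lhs => rw [← Submodule.starProjection_eq_self_iff.2 hw]
      exact hproj w
    rw [hw']
    apply Tendsto.congr (fun α => (hproj (wnet α)).symm)
    apply tendsto_finset_sum
    intro i _
    have hbne : ((b i : K) : E m) ≠ 0 := by
      intro h0
      have := b.orthonormal.ne_zero i
      exact this (Subtype.ext h0)
    exact ((key ((b i : K) : E m) (SetLike.coe_mem _)).2).smul_const _
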